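/- arXiv:math/0512141 — 2 statements merged into one kernel-verified Lean document; each statement's English description precedes it below -/
import Mathlib

section
/- Let F be a cumulative distribution function with hazard rate h on [t₀,∞). Assume h is regularly varying of index −1 and condition (BasicH) holds. Then for all positive real numbers a, b and c, F̄(t/a)·F̄(t/b) / F̄(t/c) → 0 as t → ∞. -/
open MeasureTheory Filter Set

noncomputable section

/-- `h` is a hazard rate for the upper tail of `F` on `[t₀, ∞)`:
`F̄(t₀) > 0`, `h` is nonnegative and locally integrable on `[t₀, ∞)`, and
`F̄(t) = F̄(t₀) · exp(−∫_{t₀}^t h(u) du)` for all `t ≥ t₀`. -/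
def HasHazardRate (F h : ℝ → ℝ) (t₀ : ℝ) : Prop :=
  0 < 1 - F t₀ ∧ (∀ t, t₀ ≤ t → 0 ≤ h t) ∧
    MeasureTheory.LocallyIntegrableOn h (Set.Ici t₀) ∧
    ∀ t, t₀ ≤ t → 1 - F t = (1 - F t₀) * Real.exp (-(∫ u in t₀..t, h u))

/-- `g`, positive on a neighborhood of `∞`, is regularly varying of index `ρ`:
for every `a > 0`, `g(at)/g(t) → a^ρ` as `t → ∞`. -/
def RegularlyVarying (g : ℝ → ℝ) (ρ : ℝ) : Prop :=
  (∀ᶠ t in Filter.atTop, 0 < g t) ∧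
    ∀ a : ℝ, 0 < a →
      Filter.Tendsto (fun t => g (a * t) / g t) Filter.atTop (nhds (a ^ ρ))

/-- `g` is smoothly varying of index `α` and order `m`: `g` is `m` times continuously
differentiable on a neighborhood of `∞` and `g^(m)` is regularly varying of index `α − m`. -/
def SmoothlyVarying (g : ℝ → ℝ) (α : ℝ) (m : ℕ) : Prop :=
  (∃ T : ℝ, ContDiffOn ℝ (m : ℕ∞) g (Set.Ici T)) ∧
    RegularlyVarying (iteratedDeriv m g) (α - m)

/-- Condition (BasicH): `h` is regularly varying of some index, `t·h(t) → ∞`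
and `h(t) → 0` as `t → ∞`. -/
def BasicH (h : ℝ → ℝ) : Prop :=
  (∃ ρ : ℝ, RegularlyVarying h ρ) ∧
    Filter.Tendsto (fun t => t * h t) Filter.atTop Filter.atTop ∧
    Filter.Tendsto h Filter.atTop (nhds 0)

/-- `F` is a cumulative distribution function on `ℝ`. -/
def IsCDF (F : ℝ → ℝ) : Prop :=
  Monotone F ∧ (∀ x, ContinuousWithinAt F (Set.Ici x) x) ∧
    Filter.Tendsto F Filter.atBot (nhds 0) ∧ Filter.Tendsto F Filter.atTop (nhds 1)

namespace Stmt16Aux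


/-- integrated hazard -/
def Hf (h : ℝ → ℝ) (t₀ t : ℝ) : ℝ := ∫ u in t₀..t, h u

variable {h : ℝ → ℝ} {t₀ : ℝ}

lemma aux_intable (hloc : LocallyIntegrableOn h (Ici t₀)) {s t : ℝ}
    (hs : t₀ ≤ s) (ht : t₀ ≤ t) : IntervalIntegrable h volume s t := by
  have hsub : Set.uIcc s t ⊆ Set.Ici t₀ := by
    intro x hx
    rcases le_total s t with hst | hst
    · rw [Set.uIcc_of_le hst] at hx; exact le_trans hs hx.1
    · rw [Set.uIcc_of_ge hst] at hx; exact le_trans ht hx.1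
  have H := hloc.integrableOn_compact_subset hsub isCompact_uIcc
  rw [intervalIntegrable_iff]
  exact H.mono_set Set.uIoc_subset_uIcc

lemma aux_split (hloc : LocallyIntegrableOn h (Ici t₀)) {s t : ℝ}
    (hs : t₀ ≤ s) (ht : t₀ ≤ t) :
    Hf h t₀ t - Hf h t₀ s = ∫ u in s..t, h u := by
  have := intervalIntegral.integral_add_adjacent_intervals
    (aux_intable hloc le_rfl hs) (aux_intable hloc hs ht)
  unfold Hf; linarith

lemma aux_int_nonneg (h0 : ∀ t, t₀ ≤ t → 0 ≤ h t) {s t : ℝ}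
    (hs : t₀ ≤ s) (hst : s ≤ t) : 0 ≤ ∫ u in s..t, h u :=
  intervalIntegral.integral_nonneg hst (fun u hu => h0 u (le_trans hs hu.1))

lemma H_nonneg (h0 : ∀ t, t₀ ≤ t → 0 ≤ h t) {t : ℝ} (ht : t₀ ≤ t) :
    0 ≤ Hf h t₀ t := aux_int_nonneg h0 le_rfl ht

lemma H_mono (h0 : ∀ t, t₀ ≤ t → 0 ≤ h t) (hloc : LocallyIntegrableOn h (Ici t₀))
    {s t : ℝ} (hs : t₀ ≤ s) (hst : s ≤ t) : Hf h t₀ s ≤ Hf h t₀ t := by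
  have h1 := aux_int_nonneg h0 hs hst
  have h2 := aux_split hloc hs (hs.trans hst)
  linarith

lemma H_top (h0 : ∀ t, t₀ ≤ t → 0 ≤ h t) (hloc : LocallyIntegrableOn h (Ici t₀))
    (hth : Tendsto (fun t => t * h t) atTop atTop) :
    Tendsto (Hf h t₀) atTop atTop := by
  obtain ⟨T, hT⟩ := eventually_atTop.mp (hth.eventually_ge_atTop 1)
  set T' : ℝ := max T (max t₀ 1) with hT'def
  have hT't₀ : t₀ ≤ T' := le_max_of_le_right (le_max_left _ _)
  have hT'1 : (1:ℝ) ≤ T' := le_max_of_le_right (le_max_right _ _)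
  apply tendsto_atTop_mono' atTop (f₁ := fun t => Real.log t - Real.log T')
  · filter_upwards [eventually_ge_atTop T'] with t ht
    have hii : IntervalIntegrable (fun u : ℝ => u⁻¹) volume T' t := by
      apply ContinuousOn.intervalIntegrable
      apply ContinuousOn.inv₀ continuousOn_id
      intro x hx h0x
      have : (1:ℝ) ≤ x := le_trans hT'1 ((Set.uIcc_of_le ht ▸ hx).1)
      simp only [id_eq] at h0x
      linarith
    have hle : ∫ u in T'..t, u⁻¹ ≤ ∫ u in T'..t, h u := by
      apply intervalIntegral.integral_mono_on ht hii (aux_intable hloc hT't₀ (hT't₀.trans ht))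
      intro u hu
      have hu1 : (1:ℝ) ≤ u := le_trans hT'1 hu.1
      have := hT u (le_trans (le_max_left _ _) hu.1)
      rw [inv_le_iff_one_le_mul₀ (by linarith)]
      linarith [this]
    have hinv : ∫ u in T'..t, u⁻¹ = Real.log (t / T') := by
      apply integral_inv
      intro hx
      have : (1:ℝ) ≤ (0:ℝ) := le_trans hT'1 ((Set.uIcc_of_le ht ▸ hx).1)
      linarith
    have hsplit := aux_split hloc hT't₀ (hT't₀.trans ht)
    have hnn := H_nonneg h0 (h := h) hT't₀
    rw [Real.log_div (by linarith) (by linarith)] at hinv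
    linarith
  · exact tendsto_atTop_add_const_right _ _ Real.tendsto_log_atTop

lemma key2 (h0 : ∀ t, t₀ ≤ t → 0 ≤ h t) (hloc : LocallyIntegrableOn h (Ici t₀))
    (hpos : ∀ᶠ t in atTop, 0 < h t)
    (hratio : Tendsto (fun t => h (2 * t) / h t) atTop (nhds ((2:ℝ) ^ (-1:ℝ))))
    {ε : ℝ} (hε : 0 < ε) :
    ∀ᶠ t in atTop, Hf h t₀ (2*t) - Hf h t₀ t ≤ ε * Hf h t₀ t := by
  set ε₁ := ε/2 with hε₁def
  have hε₁ : 0 < ε₁ := by positivity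
  set q := 1 + ε₁ with hqdef
  have hq1 : 1 < q := by simp [hqdef]; linarith
  have hq0 : 0 < q := by linarith
  have hev : ∀ᶠ v in atTop, 2 * h (2*v) ≤ q * h v := by
    have h2 : (2:ℝ) ^ (-1:ℝ) = 1/2 := by
      rw [Real.rpow_neg_one]; norm_num
    have hlt : ∀ᶠ v in atTop, h (2*v) / h v < q/2 := by
      apply hratio.eventually_lt_const
      rw [h2]; linarith
    filter_upwards [hlt, hpos] with v h1 h2'
    have := (div_lt_iff₀ h2').mp h1
    nlinarith
  obtain ⟨T₀, hT₀⟩ := eventually_atTop.mp hev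
  set T₁ : ℝ := max T₀ (max t₀ 1) with hT₁def
  have hT₁t₀ : t₀ ≤ T₁ := le_max_of_le_right (le_max_left _ _)
  have hT₁pos : (0:ℝ) < T₁ := lt_of_lt_of_le one_pos (le_max_of_le_right (le_max_right _ _))
  have hbd : ∀ v, T₁ ≤ v → 2 * h (2*v) ≤ q * h v := fun v hv => hT₀ v (le_trans (le_max_left _ _) hv)
  set H := Hf h t₀ with hHdef
  have claimA : ∀ t, 2*T₁ ≤ t → H (2*t) - H t ≤ q * (H t - H (t/2)) := by
    intro t ht
    have ht2 : t₀ ≤ t/2 := le_trans hT₁t₀ (by linarith)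
    have htt : t₀ ≤ t := le_trans ht2 (by linarith [hT₁pos])
    have h2t : t₀ ≤ 2*t := le_trans htt (by nlinarith)
    have e1 : H (2*t) - H t = ∫ u in t..2*t, h u := aux_split hloc htt h2t
    have e2 : H t - H (t/2) = ∫ u in (t/2)..t, h u := aux_split hloc ht2 htt
    have hhalf : 2*(t/2) = t := by ring
    have hcomp : (∫ v in (t/2)..t, h (2*v)) = (2:ℝ)⁻¹ * ∫ u in t..2*t, h u := by
      rw [intervalIntegral.integral_comp_mul_left h (by norm_num : (2:ℝ) ≠ 0), hhalf, smul_eq_mul]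
    have hint1 : IntervalIntegrable (fun v => 2 * h (2*v)) volume (t/2) t := by
      have h' := (aux_intable hloc htt h2t).comp_mul_left (c := 2)
      rw [show (2*t)/2 = t by ring] at h'
      exact h'.const_mul 2
    have hint2 := (aux_intable hloc ht2 htt).const_mul q
    have hmono : (∫ v in (t/2)..t, 2 * h (2*v)) ≤ ∫ v in (t/2)..t, q * h v := by
      apply intervalIntegral.integral_mono_on (by linarith) hint1 hint2
      intro v hv
      exact hbd v (by linarith [hv.1])
    calc H (2*t) - H t = ∫ u in t..2*t, h u := e1
      _ = ∫ v in (t/2)..t, 2 * h (2*v) := by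
          rw [intervalIntegral.integral_const_mul, hcomp]; ring
      _ ≤ ∫ v in (t/2)..t, q * h v := hmono
      _ = q * (H t - H (t/2)) := by rw [intervalIntegral.integral_const_mul, e2]
  set c : ℕ → ℝ := fun n => ∑ k ∈ Finset.range n, (q⁻¹)^k with hcdef
  have hcnonneg : ∀ n, 0 ≤ c n := fun n => Finset.sum_nonneg (fun k _ => by positivity)
  have hone_le_pow : ∀ n : ℕ, (1:ℝ) ≤ 2^n := fun n => one_le_pow₀ (by norm_num)
  have claimC : ∀ n, ∀ t, 2^n * (2*T₁) ≤ t → c n * (H t - H (t/2)) ≤ H t := by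
    intro n
    induction n with
    | zero =>
      intro t ht
      simp only [hcdef, Finset.range_zero, Finset.sum_empty, zero_mul]
      exact H_nonneg h0 (le_trans hT₁t₀ (by nlinarith [hone_le_pow 0]))
    | succ n ih =>
      intro t ht
      rw [pow_succ] at ht
      have ht2 : 2^n * (2*T₁) ≤ t/2 := by nlinarith [hone_le_pow n]
      have ht1 : 2*T₁ ≤ t/2 := le_trans (by nlinarith [hone_le_pow n]) ht2
      have hA := claimA (t/2) ht1
      rw [show 2*(t/2) = t by ring] at hA
      have hIH := ih (t/2) ht2
      have ht₀2 : t₀ ≤ t/2 := le_trans hT₁t₀ (by linarith)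
      have ht₀4 : t₀ ≤ t/2/2 := le_trans hT₁t₀ (by linarith)
      have hJ : 0 ≤ H t - H (t/2) := by
        have := H_mono h0 hloc ht₀2 (by linarith : t/2 ≤ t); linarith
      have hJh : 0 ≤ H (t/2) - H (t/2/2) := by
        have := H_mono h0 hloc ht₀4 (by linarith : t/2/2 ≤ t/2); linarith
      have hsucc : c (n+1) = q⁻¹ * c n + 1 := by
        simp only [hcdef]; rw [geom_sum_succ]
      have hqinv : q⁻¹ * q = 1 := inv_mul_cancel₀ (ne_of_gt hq0)
      have hstep : q⁻¹ * (H t - H (t/2)) ≤ H (t/2) - H (t/2/2) := by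
        rw [inv_mul_le_iff₀ hq0]; linarith
      have h3 : c n * (q⁻¹ * (H t - H (t/2))) ≤ c n * (H (t/2) - H (t/2/2)) :=
        mul_le_mul_of_nonneg_left hstep (hcnonneg n)
      rw [hsucc]
      nlinarith [hIH]
  have hgeom : Tendsto c atTop (nhds (1 - q⁻¹)⁻¹) :=
    (hasSum_geometric_of_lt_one (by positivity) (inv_lt_one_of_one_lt₀ hq1)).tendsto_sum_nat
  have hlimval : (1 - q⁻¹)⁻¹ = q/ε₁ := by
    rw [hqdef]; field_simp
    rw [add_sub_cancel_left, div_self (ne_of_gt hε₁)]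
  have hlim_gt : q/ε < (1 - q⁻¹)⁻¹ := by
    rw [hlimval, hε₁def]
    rw [div_lt_div_iff₀ hε (by positivity)]
    nlinarith
  obtain ⟨n, hn⟩ := (hgeom.eventually_const_lt hlim_gt).exists
  have hcn_pos : 0 < c n := lt_of_le_of_lt (by positivity) hn
  have hqcn : q ≤ ε * c n := by
    rw [div_lt_iff₀ hε] at hn; nlinarith
  filter_upwards [eventually_ge_atTop (2^n * (2*T₁)), eventually_ge_atTop (2*T₁)] with t htn ht1
  have hC := claimC n t htn
  have hA := claimA t ht1
  have ht₀2 : t₀ ≤ t/2 := le_trans hT₁t₀ (by linarith)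
  have hJ : 0 ≤ H t - H (t/2) := by
    have := H_mono h0 hloc ht₀2 (by linarith : t/2 ≤ t); linarith
  have hHt : 0 ≤ H t := H_nonneg h0 (le_trans ht₀2 (by linarith))
  nlinarith
lemma key2n (h0 : ∀ t, t₀ ≤ t → 0 ≤ h t) (hloc : LocallyIntegrableOn h (Ici t₀))
    (hpos : ∀ᶠ t in atTop, 0 < h t)
    (hratio : Tendsto (fun t => h (2 * t) / h t) atTop (nhds ((2:ℝ) ^ (-1:ℝ)))) :
    ∀ n : ℕ, ∀ ε : ℝ, 0 < ε →
      ∀ᶠ t in atTop, Hf h t₀ ((2:ℝ)^n * t) ≤ (1+ε) * Hf h t₀ t := by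
  intro n
  induction n with
  | zero =>
    intro ε hε
    filter_upwards [eventually_ge_atTop t₀] with t ht
    have := H_nonneg h0 ht
    simp only [pow_zero, one_mul]
    nlinarith
  | succ n ih =>
    intro ε hε
    set ε' := min (ε/3) 1 with hε'def
    have hε'pos : 0 < ε' := lt_min (by linarith) one_pos
    have h1 : ε' ≤ ε/3 := min_le_left _ _
    have h2 : ε' ≤ 1 := min_le_right _ _
    have h2n : Tendsto (fun t : ℝ => (2:ℝ)^n * t) atTop atTop :=
      Tendsto.const_mul_atTop (by positivity) tendsto_id
    filter_upwards [ih ε' hε'pos, h2n.eventually (key2 h0 hloc hpos hratio hε'pos),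
      eventually_ge_atTop t₀] with t hih hk ht
    have hnn : 0 ≤ Hf h t₀ t := H_nonneg h0 ht
    have he : (2:ℝ)^(n+1) * t = 2 * ((2:ℝ)^n * t) := by ring
    rw [he]
    have h5 : 0 ≤ ε - 2*ε' - ε'*ε' := by nlinarith
    have h3 : (1+ε')*((1+ε') * Hf h t₀ t) ≤ (1+ε) * Hf h t₀ t := by
      nlinarith [mul_nonneg h5 hnn]
    have h4 : (1+ε') * Hf h t₀ ((2:ℝ)^n * t) ≤ (1+ε')*((1+ε') * Hf h t₀ t) :=
      mul_le_mul_of_nonneg_left hih (by linarith)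
    linarith

lemma compare (h0 : ∀ t, t₀ ≤ t → 0 ≤ h t) (hloc : LocallyIntegrableOn h (Ici t₀))
    (hpos : ∀ᶠ t in atTop, 0 < h t)
    (hratio : Tendsto (fun t => h (2 * t) / h t) atTop (nhds ((2:ℝ) ^ (-1:ℝ))))
    {μ ε : ℝ} (hμ : 0 < μ) (hε : 0 < ε) :
    ∀ᶠ t in atTop, Hf h t₀ (μ * t) ≤ (1+ε) * Hf h t₀ t := by
  obtain ⟨n, hn⟩ := pow_unbounded_of_one_lt μ (one_lt_two (α := ℝ))
  filter_upwards [key2n h0 hloc hpos hratio n ε hε,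
    eventually_ge_atTop (max 0 (t₀ / μ))] with t hk ht
  have ht0 : 0 ≤ t := le_trans (le_max_left _ _) ht
  have hμt : t₀ ≤ μ * t := by
    have : t₀ / μ ≤ t := le_trans (le_max_right _ _) ht
    calc t₀ = μ * (t₀ / μ) := by field_simp
    _ ≤ μ * t := by nlinarith
  have := H_mono h0 hloc hμt (by nlinarith : μ * t ≤ (2:ℝ)^n * t)
  linarith

end Stmt16Aux

open Stmt16Aux

/-- if `h` is regularly varying of index `−1` and (BasicH) holds, then
`F̄(t/a)·F̄(t/b) = o(F̄(t/c))` for all positive `a`, `b`, `c`. -/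
theorem stmt_16 (F h : ℝ → ℝ) (t₀ : ℝ) (hF : IsCDF F)
    (hh : HasHazardRate F h t₀)
    (hrv : RegularlyVarying h (-1)) (hb : BasicH h) :
    ∀ a b c : ℝ, 0 < a → 0 < b → 0 < c →
      Filter.Tendsto (fun t => (1 - F (t / a)) * (1 - F (t / b)) / (1 - F (t / c)))
        Filter.atTop (nhds 0) := by
  obtain ⟨hK, h0, hloc, hFeq⟩ := hh
  have hpos : ∀ᶠ t in atTop, 0 < h t := hrv.1
  have hratio := hrv.2 2 two_pos
  have hth := hb.2.1
  intro a b c ha hb' hc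
  have hda : Tendsto (fun t : ℝ => t / a) atTop atTop := tendsto_id.atTop_div_const ha
  have hdb : Tendsto (fun t : ℝ => t / b) atTop atTop := tendsto_id.atTop_div_const hb'
  have hdc : Tendsto (fun t : ℝ => t / c) atTop atTop := tendsto_id.atTop_div_const hc
  set H : ℝ → ℝ := Hf h t₀ with hHdef
  -- comparisons
  have e1 := hda.eventually (compare h0 hloc hpos hratio
    (show (0:ℝ) < a/c by positivity) (show (0:ℝ) < 1/2 by norm_num))
  have e2 := hdb.eventually (compare h0 hloc hpos hratio
    (show (0:ℝ) < b/a by positivity) (show (0:ℝ) < 1/2 by norm_num))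
  have hSlb : ∀ᶠ t in atTop, (1/4) * H (t/b) ≤ H (t/a) + H (t/b) - H (t/c) := by
    filter_upwards [e1, e2] with t h1 h2
    rw [show a/c * (t/a) = t/c by field_simp] at h1
    rw [show b/a * (t/b) = t/a by field_simp] at h2
    linarith
  have hHb : Tendsto (fun t => H (t/b)) atTop atTop := (H_top h0 hloc hth).comp hdb
  have hS : Tendsto (fun t => H (t/a) + H (t/b) - H (t/c)) atTop atTop :=
    tendsto_atTop_mono' atTop hSlb (hHb.const_mul_atTop (by norm_num : (0:ℝ) < 1/4))
  have hexp : Tendsto (fun t => (1 - F t₀) *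
      Real.exp (-(H (t/a) + H (t/b) - H (t/c)))) atTop (nhds 0) := by
    have h1 : Tendsto (fun t => Real.exp (-(H (t/a) + H (t/b) - H (t/c))))
        atTop (nhds 0) := Real.tendsto_exp_atBot.comp (tendsto_neg_atTop_atBot.comp hS)
    have := h1.const_mul (1 - F t₀)
    simpa using this
  apply Filter.Tendsto.congr' _ hexp
  filter_upwards [hda.eventually (eventually_ge_atTop t₀),
    hdb.eventually (eventually_ge_atTop t₀),
    hdc.eventually (eventually_ge_atTop t₀)] with t h1 h2 h3
  have e1 : 1 - F (t/a) = (1 - F t₀) * Real.exp (-(H (t/a))) := hFeq _ h1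
  have e2 : 1 - F (t/b) = (1 - F t₀) * Real.exp (-(H (t/b))) := hFeq _ h2
  have e3 : 1 - F (t/c) = (1 - F t₀) * Real.exp (-(H (t/c))) := hFeq _ h3
  have hKne : (1 - F t₀) ≠ 0 := ne_of_gt hK
  rw [e1, e2, e3, eq_div_iff (mul_ne_zero hKne (Real.exp_ne_zero _))]
  have hkey : Real.exp (-(H (t/a) + H (t/b) - H (t/c))) * Real.exp (-H (t/c)) =
      Real.exp (-H (t/a)) * Real.exp (-H (t/b)) := by
    rw [← Real.exp_add, ← Real.exp_add]; congr 1; ring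
  linear_combination ((1 - F t₀) * (1 - F t₀)) * hkey
end
end

section
/- Let F be a cumulative distribution function with hazard rate h on [t₀,∞) satisfying condition (BasicH), and assume: (i) t·h(t)/log t → 0 as t → ∞; and (ii) limsup_{t→∞} t·h(t)² / h(1/h(t)) < ∞. Let M be a positive number and let K be a cumulative distribution function in B(F,M). Then for all positive real numbers a and b, ( (T_K applied to the function s ↦ F̄(s/a))(t) − F̄(t/a) ) / F̄(t/b) → 0 as t → ∞. -/
open MeasureTheory Filter Set

noncomputable section

/-- `K` (a probability measure on `ℝ`) belongs to `B(F,M)`: both `K̄(t)` and `K(−t)` are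
bounded by `M·F̄(t)` for all `t ≥ 0`. Here `F̄ = 1 − F`. -/
def MemB (F : ℝ → ℝ) (M : ℝ) (μK : Measure ℝ) : Prop :=
  ∀ t : ℝ, 0 ≤ t → (μK (Set.Ioi t)).toReal ≤ M * (1 - F t) ∧
    (μK (Set.Iic (-t))).toReal ≤ M * (1 - F t)

/-- The operator `T_K` (written `Tops`): `T_K f(t) = ∫_{(−∞,t/2]} f(t−x) dK(x)`. -/
def Tops (μK : Measure ℝ) (f : ℝ → ℝ) : ℝ → ℝ :=
  fun t => ∫ x in Set.Iic (t / 2), f (t - x) ∂μK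

section Aux

variable {F h : ℝ → ℝ} {t₀ : ℝ}

lemma aux_F_le_one (hF : IsCDF F) (t : ℝ) : F t ≤ 1 :=
  hF.1.ge_of_tendsto hF.2.2.2 t

lemma aux_G_nonneg (hF : IsCDF F) (t : ℝ) : 0 ≤ 1 - F t := by
  linarith [aux_F_le_one hF t]

lemma aux_G_le_one (hF : IsCDF F) (t : ℝ) : 1 - F t ≤ 1 := by
  have : 0 ≤ F t := hF.1.le_of_tendsto hF.2.2.1 t
  linarith

lemma aux_G_anti (hF : IsCDF F) : Antitone (fun t => 1 - F t) :=
  fun _ _ hle => by have := hF.1 hle; simp only []; linarith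

lemma aux_intInt (hh : HasHazardRate F h t₀) {s t : ℝ} (hs : t₀ ≤ s) (hst : s ≤ t) :
    IntervalIntegrable h MeasureTheory.volume s t := by
  have : IntegrableOn h (Set.Icc s t) volume :=
    hh.2.2.1.integrableOn_compact_subset (Set.Icc_subset_Ici_iff hst |>.mpr hs) isCompact_Icc
  rw [intervalIntegrable_iff, Set.uIoc_of_le hst]
  exact this.mono_set Set.Ioc_subset_Icc_self


section more
variable (hF : IsCDF F) (hh : HasHazardRate F h t₀)
include hh

lemma aux_ratio {s t : ℝ} (hs : t₀ ≤ s) (hst : s ≤ t) :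
    1 - F t = (1 - F s) * Real.exp (-(∫ u in s..t, h u)) := by
  have h1 := hh.2.2.2 s hs
  have h2 := hh.2.2.2 t (hs.trans hst)
  have hadd : (∫ u in t₀..s, h u) + (∫ u in s..t, h u) = ∫ u in t₀..t, h u :=
    intervalIntegral.integral_add_adjacent_intervals (aux_intInt hh le_rfl hs)
      (aux_intInt hh hs hst)
  rw [h1, h2, ← hadd, neg_add, Real.exp_add]; ring

lemma aux_int_nonneg {s t : ℝ} (hs : t₀ ≤ s) (hst : s ≤ t) :
    0 ≤ ∫ u in s..t, h u :=
  intervalIntegral.integral_nonneg hst (fun u hu => hh.2.1 u (hs.trans hu.1))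

include hF in
lemma aux_G_pos (t : ℝ) : 0 < 1 - F t := by
  rcases le_total t t₀ with ht | ht
  · exact lt_of_lt_of_le hh.1 (aux_G_anti hF ht)
  · rw [hh.2.2.2 t ht]; exact mul_pos hh.1 (Real.exp_pos _)

include hF in
lemma aux_superpoly (hgrow : Tendsto (fun t => t * h t) atTop atTop) (A : ℝ) :
    Tendsto (fun t => (1 - F t) * t ^ A) atTop (nhds 0) := by
  set B := |A| + 1 with hB
  obtain ⟨T0, hT0⟩ := eventually_atTop.1 (hgrow.eventually_ge_atTop B)
  set T := max T0 (max t₀ 1) with hTdef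
  have hT1 : (1:ℝ) ≤ T := le_max_of_le_right (le_max_right _ _)
  have hTt₀ : t₀ ≤ T := le_max_of_le_right (le_max_left _ _)
  have hTpos : (0:ℝ) < T := lt_of_lt_of_le one_pos hT1
  set C := (1 - F T) * Real.exp (B * Real.log T) with hC
  have key : ∀ t, T ≤ t → (1 - F t) * t ^ A ≤ C * t ^ (-1 : ℝ) := by
    intro t ht
    have htpos : 0 < t := lt_of_lt_of_le hTpos ht
    have hintle : B * (Real.log t - Real.log T) ≤ ∫ u in T..t, h u := by
      have hcont : ContinuousOn (fun u : ℝ => B / u) (Set.uIcc T t) := by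
        apply ContinuousOn.div continuousOn_const continuousOn_id
        intro u hu
        rw [Set.uIcc_of_le ht] at hu
        exact ne_of_gt (lt_of_lt_of_le hTpos hu.1)
      have hint1 : IntervalIntegrable (fun u : ℝ => B / u) volume T t :=
        hcont.intervalIntegrable
      have hmono : ∀ u ∈ Set.Icc T t, B / u ≤ h u := by
        intro u hu
        have hu0 : 0 < u := lt_of_lt_of_le hTpos hu.1
        rw [div_le_iff₀ hu0]
        calc B ≤ u * h u := hT0 u (le_trans (le_max_left _ _) hu.1)
          _ = h u * u := mul_comm _ _
      have := intervalIntegral.integral_mono_on ht hint1 (aux_intInt hh hTt₀ ht) hmono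
      calc B * (Real.log t - Real.log T) = ∫ u in T..t, B / u := by
            simp_rw [div_eq_mul_inv]
            rw [intervalIntegral.integral_const_mul, integral_inv (by
              rw [Set.uIcc_of_le ht]
              exact fun hmem => absurd hmem.1 (not_le.mpr hTpos)),
              Real.log_div (ne_of_gt htpos) (ne_of_gt hTpos)]
        _ ≤ ∫ u in T..t, h u := this
    have hformula := aux_ratio hh hTt₀ ht
    have hexp : Real.exp (-(∫ u in T..t, h u)) ≤ Real.exp (-(B * (Real.log t - Real.log T))) :=
      Real.exp_le_exp.mpr (neg_le_neg hintle)
    have hG1 : 1 - F t ≤ (1 - F T) * Real.exp (-(B * (Real.log t - Real.log T))) := by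
      rw [hformula]
      exact mul_le_mul_of_nonneg_left hexp (aux_G_nonneg hF T)
    have hexp2 : Real.exp (-(B * (Real.log t - Real.log T)))
        = Real.exp (B * Real.log T) * t ^ (-B) := by
      rw [Real.rpow_def_of_pos htpos, ← Real.exp_add]; ring_nf
    have h2 : (1 - F t) * t ^ A ≤ C * (t ^ (-B) * t ^ A) := by
      rw [hC]
      calc (1 - F t) * t ^ A
          ≤ ((1 - F T) * Real.exp (-(B * (Real.log t - Real.log T)))) * t ^ A :=
            mul_le_mul_of_nonneg_right hG1 (Real.rpow_nonneg htpos.le A)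
        _ = (1 - F T) * Real.exp (B * Real.log T) * (t ^ (-B) * t ^ A) := by
            rw [hexp2]; ring
    calc (1 - F t) * t ^ A ≤ C * (t ^ (-B) * t ^ A) := h2
      _ = C * t ^ (A - B) := by rw [← Real.rpow_add htpos]; ring_nf
      _ ≤ C * t ^ (-1 : ℝ) := by
          apply mul_le_mul_of_nonneg_left _ (mul_nonneg (aux_G_nonneg hF T) (Real.exp_pos _).le)
          apply Real.rpow_le_rpow_of_exponent_le (le_trans hT1 ht)
          have : A ≤ |A| := le_abs_self A
          rw [hB]; linarith
  have hlim : Tendsto (fun t : ℝ => C * t ^ (-1 : ℝ)) atTop (nhds 0) := by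
    have := (tendsto_rpow_neg_atTop (one_pos)).const_mul C
    simpa using this
  apply squeeze_zero' _ _ hlim
  · filter_upwards [eventually_gt_atTop 0] with t ht
    exact mul_nonneg (aux_G_nonneg hF t) (Real.rpow_nonneg ht.le A)
  · filter_upwards [eventually_ge_atTop T] with t ht using key t ht

end more

section more2
variable (hF : IsCDF F) (hh : HasHazardRate F h t₀)
include hh

lemma aux_h_small (hi : Tendsto (fun t => t * h t / Real.log t) atTop (nhds 0))
    {ε : ℝ} (hε : 0 < ε) :
    ∃ U : ℝ, t₀ ≤ U ∧ 2 ≤ U ∧ ∀ u, U ≤ u → h u ≤ ε * Real.log u / u := by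
  have h1 : ∀ᶠ u in atTop, |u * h u / Real.log u| < ε := by
    have := hi.eventually (Metric.ball_mem_nhds (0:ℝ) hε)
    filter_upwards [this] with u hu
    rwa [Real.dist_eq, sub_zero] at hu
  obtain ⟨U0, hU0⟩ := eventually_atTop.1 h1
  refine ⟨max U0 (max t₀ 2), le_max_of_le_right (le_max_left _ _),
    le_max_of_le_right (le_max_right _ _), ?_⟩
  intro u hu
  have hu2 : (2:ℝ) ≤ u := le_trans (le_max_of_le_right (le_max_right _ _)) hu
  have hupos : (0:ℝ) < u := lt_of_lt_of_le two_pos hu2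
  have hlogpos : 0 < Real.log u := Real.log_pos (lt_of_lt_of_le one_lt_two hu2)
  have habs := hU0 u (le_trans (le_max_left _ _) hu)
  have hlt : u * h u / Real.log u ≤ ε := le_of_lt (lt_of_abs_lt habs)
  have : h u = (u * h u / Real.log u) * (Real.log u / u) := by
    field_simp
  rw [this]
  have hq : 0 ≤ Real.log u / u := div_nonneg hlogpos.le hupos.le
  calc (u * h u / Real.log u) * (Real.log u / u) ≤ ε * (Real.log u / u) :=
        mul_le_mul_of_nonneg_right hlt hq
    _ = ε * Real.log u / u := by ring

include hF in
lemma aux_ratio_poly (hi : Tendsto (fun t => t * h t / Real.log t) atTop (nhds 0))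
    {c1 c2 : ℝ} (hc1 : 0 < c1) (hc12 : c1 ≤ c2) {ε : ℝ} (hε : 0 < ε) :
    ∀ᶠ t in atTop, 1 - F (c1 * t) ≤ (1 - F (c2 * t)) * t ^ ε := by
  have hc2 : 0 < c2 := lt_of_lt_of_le hc1 hc12
  set ε' : ℝ := ε * c1 / (2 * (c2 - c1) + 1) with hε'def
  have hden : (0:ℝ) < 2 * (c2 - c1) + 1 := by nlinarith
  have hε' : 0 < ε' := by
    apply div_pos (mul_pos hε hc1) hden
  obtain ⟨U, hUt₀, hU2, hU⟩ := aux_h_small hh hi hε'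
  filter_upwards [eventually_ge_atTop (U / c1), eventually_ge_atTop (1:ℝ),
    Real.tendsto_log_atTop.eventually_ge_atTop (|Real.log c2|)] with t htU ht1 htlog
  have htpos : (0:ℝ) < t := lt_of_lt_of_le one_pos ht1
  have hc1t : U ≤ c1 * t := by
    rw [div_le_iff₀ hc1] at htU; linarith [htU]
  have hc1tpos : 0 < c1 * t := mul_pos hc1 htpos
  have hc1t2 : (2:ℝ) ≤ c1 * t := le_trans hU2 hc1t
  have hc2t : c1 * t ≤ c2 * t := by nlinarith
  have hlogc2t_nonneg : 0 ≤ Real.log (c2 * t) :=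
    Real.log_nonneg (by linarith [le_trans hc1t2 hc2t])
  have hlogc2t : Real.log (c2 * t) ≤ 2 * Real.log t := by
    rw [Real.log_mul (ne_of_gt hc2) (ne_of_gt htpos)]
    have := le_trans (le_abs_self _) htlog
    linarith
  -- bound the integral
  have hJle : (∫ u in (c1*t)..(c2*t), h u) ≤ ε * Real.log t := by
    have hub : ∀ u ∈ Set.Icc (c1*t) (c2*t), h u ≤ ε' * Real.log (c2*t) / (c1*t) := by
      intro u hu
      have hu0 : 0 < u := lt_of_lt_of_le hc1tpos hu.1
      calc h u ≤ ε' * Real.log u / u := hU u (le_trans hc1t hu.1)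
        _ ≤ ε' * Real.log (c2*t) / u :=
            div_le_div_of_nonneg_right
              (mul_le_mul_of_nonneg_left (Real.log_le_log hu0 hu.2) hε'.le) hu0.le
        _ ≤ ε' * Real.log (c2*t) / (c1*t) :=
            div_le_div_of_nonneg_left (mul_nonneg hε'.le hlogc2t_nonneg) hc1tpos hu.1
    have hint := intervalIntegral.integral_mono_on hc2t
      (aux_intInt hh (le_trans hUt₀ hc1t) hc2t) intervalIntegrable_const hub
    rw [intervalIntegral.integral_const, smul_eq_mul] at hint
    calc (∫ u in (c1*t)..(c2*t), h u)
        ≤ (c2*t - c1*t) * (ε' * Real.log (c2*t) / (c1*t)) := hint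
      _ = ε' * (c2 - c1) / c1 * Real.log (c2*t) := by
          field_simp
      _ ≤ ε' * (c2 - c1) / c1 * (2 * Real.log t) := by
          gcongr
      _ ≤ ε * Real.log t := by
          rw [hε'def]
          rw [div_mul_eq_mul_div, div_mul_eq_mul_div, div_le_iff₀ hc1, div_mul_eq_mul_div,
            div_le_iff₀ hden]
          have hlogt : 0 ≤ Real.log t := Real.log_nonneg ht1
          nlinarith [mul_nonneg (mul_nonneg hε.le hc1.le) hlogt,
            mul_nonneg (mul_nonneg (mul_nonneg hε.le hc1.le) hlogt) (sub_nonneg.mpr hc12)]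
  have hratio := aux_ratio hh (le_trans hUt₀ hc1t) hc2t
  have hflip : 1 - F (c1*t) = (1 - F (c2*t)) * Real.exp (∫ u in (c1*t)..(c2*t), h u) := by
    rw [hratio, mul_assoc, ← Real.exp_add]
    simp
  rw [hflip]
  have : Real.exp (∫ u in (c1*t)..(c2*t), h u) ≤ t ^ ε := by
    rw [Real.rpow_def_of_pos htpos]
    exact Real.exp_le_exp.mpr (by rw [mul_comm (Real.log t) ε]; exact hJle)
  exact mul_le_mul_of_nonneg_left this (aux_G_nonneg hF _)

end more2

lemma aux_Elim (hF : IsCDF F) (hh : HasHazardRate F h t₀)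
    (hgrow : Tendsto (fun t => t * h t) atTop atTop) {a M : ℝ} (ha : 0 < a) :
    Tendsto (fun t => t ^ (1/4:ℝ) * (2*M*(1 - F (Real.sqrt t))
      + 4*Real.log (2*t/a)/Real.sqrt t + M*(1 - F (t/2)))) atTop (nhds 0) := by
  have hsqrt_top : Tendsto Real.sqrt atTop atTop := by
    apply (tendsto_rpow_atTop (by norm_num : (0:ℝ) < 1/2)).congr'
    filter_upwards with t using (Real.sqrt_eq_rpow t).symm
  have l1 : Tendsto (fun t => 2*M*((1 - F (Real.sqrt t)) * (Real.sqrt t) ^ (1/2:ℝ)))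
      atTop (nhds 0) := by
    have := ((aux_superpoly hF hh hgrow (1/2)).comp hsqrt_top).const_mul (2*M)
    simpa using this
  have l2 : Tendsto (fun t => 4*((Real.log (2/a) + Real.log t) / t ^ (1/4:ℝ)))
      atTop (nhds 0) := by
    have l2a : Tendsto (fun t : ℝ => Real.log (2/a) / t ^ (1/4:ℝ)) atTop (nhds 0) :=
      tendsto_const_nhds.div_atTop (tendsto_rpow_atTop (by norm_num))
    have l2b : Tendsto (fun t : ℝ => Real.log t / t ^ (1/4:ℝ)) atTop (nhds 0) :=
      (isLittleO_log_rpow_atTop (by norm_num : (0:ℝ) < 1/4)).tendsto_div_nhds_zero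
    have := (l2a.add l2b).const_mul 4
    simp only [add_div] at this ⊢
    simpa using this
  have l3 : Tendsto (fun t => M * (2:ℝ) ^ (1/4:ℝ) * ((1 - F (t/2)) * (t/2) ^ (1/4:ℝ)))
      atTop (nhds 0) := by
    have := ((aux_superpoly hF hh hgrow (1/4)).comp
      (Tendsto.atTop_div_const two_pos tendsto_id)).const_mul (M * (2:ℝ) ^ (1/4:ℝ))
    simpa using this
  have hsum := (l1.add l2).add l3
  rw [show (0:ℝ) + 0 + 0 = 0 by norm_num] at hsum
  apply hsum.congr'
  filter_upwards [eventually_ge_atTop (1:ℝ)] with t ht1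
  have htpos : (0:ℝ) < t := lt_of_lt_of_le one_pos ht1
  have hs2 : Real.sqrt t * Real.sqrt t = t := Real.mul_self_sqrt htpos.le
  have hs2pos : 0 < Real.sqrt t := Real.sqrt_pos.mpr htpos
  have e1 : (Real.sqrt t) ^ (1/2:ℝ) = t ^ (1/4:ℝ) := by
    rw [Real.sqrt_eq_rpow, ← Real.rpow_mul htpos.le]
    norm_num
  have e2 : Real.log (2/a) + Real.log t = Real.log (2*t/a) := by
    rw [← Real.log_mul (by positivity) (ne_of_gt htpos)]
    ring_nf
  have e3 : t ^ (1/4:ℝ) / t ^ (1/2:ℝ) = (t ^ (1/4:ℝ))⁻¹ := by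
    rw [← Real.rpow_sub htpos, show (1/4:ℝ) - 1/2 = -(1/4) by norm_num,
      Real.rpow_neg htpos.le]
  have e4 : (2:ℝ) ^ (1/4:ℝ) * (t/2) ^ (1/4:ℝ) = t ^ (1/4:ℝ) := by
    rw [← Real.mul_rpow (by norm_num) (by positivity), show (2:ℝ)*(t/2) = t by ring]
  have hsqrt_rpow : Real.sqrt t = t ^ (1/2:ℝ) := Real.sqrt_eq_rpow t
  rw [e1, e2]
  rw [mul_add, mul_add]
  congr 1
  · congr 1
    · ring
    · rw [hsqrt_rpow, show t ^ (1/2:ℝ) = t ^ (1/4:ℝ) * t ^ (1/4:ℝ) by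
        rw [← Real.rpow_add htpos]; norm_num]
      have hne : t ^ (1/4:ℝ) ≠ 0 := by positivity
      field_simp
  · rw [← e4]; ring

set_option maxHeartbeats 1000000 in
theorem stmt_17' (F h : ℝ → ℝ) (t₀ : ℝ) (hF : IsCDF F)
    (hh : HasHazardRate F h t₀)
    (hgrow : Filter.Tendsto (fun t => t * h t) Filter.atTop Filter.atTop)
    (hi : Filter.Tendsto (fun t => t * h t / Real.log t) Filter.atTop (nhds 0))
    (M : ℝ) (hM : 0 < M) (μK : Measure ℝ) [IsProbabilityMeasure μK]
    (hK : MemB F M μK) :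
    ∀ a b : ℝ, 0 < a → 0 < b →
      Filter.Tendsto
        (fun t => (Tops μK (fun s => 1 - F (s / a)) t - (1 - F (t / a))) / (1 - F (t / b)))
        Filter.atTop (nhds 0) := by
  intro a b ha hb
  have hGpos : ∀ t, 0 < 1 - F t := aux_G_pos hF hh
  have hGnn : ∀ t, 0 ≤ 1 - F t := aux_G_nonneg hF
  have hGanti := aux_G_anti hF
  have hG1 := aux_G_le_one hF
  -- measurability and integrability
  have hmeasf : ∀ t : ℝ, Measurable fun x : ℝ => 1 - F ((t - x)/a) := fun t =>
    measurable_const.sub (hF.1.measurable.comp ((measurable_const.sub measurable_id).div_const a))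
  have hintf : ∀ (t : ℝ) (s : Set ℝ), IntegrableOn (fun x => 1 - F ((t - x)/a)) s μK := by
    intro t s
    apply Integrable.mono' (integrable_const 1) (hmeasf t).aestronglyMeasurable
    filter_upwards with x
    rw [Real.norm_eq_abs, abs_of_nonneg (hGnn _)]
    exact hG1 _
  have hintg : ∀ (t : ℝ) (s : Set ℝ),
      IntegrableOn (fun x => (1 - F ((t - x)/a)) - (1 - F (t/a))) s μK :=
    fun t s => (hintf t s).sub (integrableOn_const)
  have hmeasg : ∀ (t : ℝ) (s : Set ℝ),
      AEStronglyMeasurable (fun x => (1 - F ((t - x)/a)) - (1 - F (t/a))) (μK.restrict s) :=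
    fun t s => ((hmeasf t).sub measurable_const).aestronglyMeasurable
  -- hazard rate pointwise bound, ε = 1
  obtain ⟨U, hUt₀, hU2, hU⟩ := aux_h_small hh hi (one_pos)
  -- the comparison of G at different scales
  set c1 : ℝ := min (1/(2*a)) (1/b) with hc1def
  have hc1pos : 0 < c1 := lt_min (by positivity) (by positivity)
  have hL3 := aux_ratio_poly hF hh hi hc1pos (min_le_right _ _)
    (by norm_num : (0:ℝ) < 1/4)
  -- the bounding function
  set E : ℝ → ℝ := fun t => t ^ (1/4:ℝ) * (2*M*(1 - F (Real.sqrt t))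
    + 4*Real.log (2*t/a)/Real.sqrt t + M*(1 - F (t/2))) with hEdef
  have hElim : Tendsto E atTop (nhds 0) := aux_Elim hF hh hgrow ha
  apply squeeze_zero_norm' _ hElim
  filter_upwards [hL3, eventually_ge_atTop (max 4 (max 1 a)),
    eventually_ge_atTop (2*a*U)] with t hL3t htmax htU
  have ht4 : (4:ℝ) ≤ t := le_trans (le_max_left _ _) htmax
  have ht1 : (1:ℝ) ≤ t := le_trans (le_max_of_le_right (le_max_left _ _)) htmax
  have hta : a ≤ t := le_trans (le_max_of_le_right (le_max_right _ _)) htmax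
  have htpos : (0:ℝ) < t := by linarith
  have hU2a : U ≤ t/(2*a) := by
    rw [le_div_iff₀ (by positivity : (0:ℝ) < 2*a)]; linarith
  have h2a_t₀ : t₀ ≤ t/(2*a) := le_trans hUt₀ hU2a
  have h2a_pos : 0 < t/(2*a) := by positivity
  set s2 : ℝ := Real.sqrt t with hs2def
  have hs2nn : 0 ≤ s2 := Real.sqrt_nonneg t
  have hs2pos : 0 < s2 := Real.sqrt_pos.mpr htpos
  have hts2 : s2 * s2 = t := Real.mul_self_sqrt htpos.le
  have hs2let2 : s2 ≤ t/2 := by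
    have h1 : Real.sqrt t ≤ Real.sqrt ((t/2)^2) := Real.sqrt_le_sqrt (by nlinarith)
    rwa [Real.sqrt_sq (by linarith)] at h1
  have hs2let : s2 ≤ t := le_trans hs2let2 (by linarith)
  set L : ℝ := Real.log (2*t/a) with hLdef
  have hLnn : 0 ≤ L := Real.log_nonneg (by rw [le_div_iff₀ ha]; linarith)
  -- pointwise hazard bound on the relevant window
  have hhaz : ∀ u, t/(2*a) ≤ u → u ≤ 2*t/a → h u ≤ L * (2*a) / t := by
    intro u hu1 hu2
    have hupos : 0 < u := lt_of_lt_of_le h2a_pos hu1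
    calc h u ≤ 1 * Real.log u / u := hU u (le_trans hU2a hu1)
      _ = Real.log u / u := by rw [one_mul]
      _ ≤ L / u := div_le_div_of_nonneg_right (Real.log_le_log hupos hu2) hupos.le
      _ ≤ L / (t/(2*a)) := div_le_div_of_nonneg_left hLnn h2a_pos hu1
      _ = L * (2*a) / t := by field_simp
  have hJ : ∀ s s', t/(2*a) ≤ s → s ≤ s' → s' ≤ 2*t/a →
      (∫ u in s..s', h u) ≤ (s' - s) * (L*(2*a)/t) := by
    intro s s' hs hss' hs'
    have hint := intervalIntegral.integral_mono_on hss'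
      (aux_intInt hh (le_trans h2a_t₀ hs) hss') intervalIntegrable_const
      (fun u hu => hhaz u (le_trans hs hu.1) (le_trans hu.2 hs'))
    rwa [intervalIntegral.integral_const, smul_eq_mul] at hint
  -- increment bound for G
  have hGdiff : ∀ s s', t₀ ≤ s → s ≤ s' →
      (1 - F s) - (1 - F s') ≤ (1 - F s) * (∫ u in s..s', h u) := by
    intro s s' hs hss'
    have hr := aux_ratio hh hs hss'
    have hexp := Real.add_one_le_exp (-(∫ u in s..s', h u))
    calc (1 - F s) - (1 - F s') = (1 - F s) * (1 - Real.exp (-(∫ u in s..s', h u))) := by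
          rw [hr]; ring
      _ ≤ (1 - F s) * (∫ u in s..s', h u) :=
          mul_le_mul_of_nonneg_left (by linarith) (hGnn s)
  -- mass identity
  have hmass : (μK (Iic (t/2))).toReal = 1 - (μK (Ioi (t/2))).toReal := by
    have h1 := measure_add_measure_compl (μ := μK) (measurableSet_Iic (a := t/2))
    rw [Set.compl_Iic, measure_univ] at h1
    have h2 := congrArg ENNReal.toReal h1
    rw [ENNReal.toReal_add (measure_ne_top _ _) (measure_ne_top _ _),
      ENNReal.toReal_one] at h2
    linarith
  set g : ℝ → ℝ := fun x => (1 - F ((t - x)/a)) - (1 - F (t/a)) with hgdef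
  have hdecomp : Tops μK (fun s => 1 - F (s/a)) t - (1 - F (t/a))
      = (∫ x in Iic (t/2), g x ∂μK) - (1 - F (t/a)) * (μK (Ioi (t/2))).toReal := by
    have heq : (∫ x in Iic (t/2), g x ∂μK)
        = (∫ x in Iic (t/2), (1 - F ((t - x)/a)) ∂μK)
          - (∫ x in Iic (t/2), (1 - F (t/a)) ∂μK) :=
      integral_sub (hintf t _) (integrableOn_const)
    rw [heq, setIntegral_const, smul_eq_mul, measureReal_def, hmass]
    simp only [Tops]
    ring
  -- region split
  have hsplit1 : (∫ x in Iic (t/2), g x ∂μK)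
      = (∫ x in Iic (-s2), g x ∂μK) + (∫ x in Ioc (-s2) (t/2), g x ∂μK) := by
    rw [← setIntegral_union (Set.Iic_disjoint_Ioc le_rfl) measurableSet_Ioc
      (hintg t _) (hintg t _), Set.Iic_union_Ioc_eq_Iic (by linarith : -s2 ≤ t/2)]
  have hsplit2 : (∫ x in Ioc (-s2) (t/2), g x ∂μK)
      = (∫ x in Ioc (-s2) 0, g x ∂μK) + (∫ x in Ioc 0 (t/2), g x ∂μK) := by
    rw [← setIntegral_union (Set.Ioc_disjoint_Ioc_of_le le_rfl) measurableSet_Ioc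
      (hintg t _) (hintg t _), Set.Ioc_union_Ioc_eq_Ioc (by linarith) (by linarith)]
  have hsplit3 : (∫ x in Ioc 0 (t/2), g x ∂μK)
      = (∫ x in Ioc 0 s2, g x ∂μK) + (∫ x in Ioc s2 (t/2), g x ∂μK) := by
    rw [← setIntegral_union (Set.Ioc_disjoint_Ioc_of_le le_rfl) measurableSet_Ioc
      (hintg t _) (hintg t _), Set.Ioc_union_Ioc_eq_Ioc hs2nn hs2let2]
  have hmass_le_one : ∀ S : Set ℝ, (μK S).toReal ≤ 1 := fun S => by
    simpa using ENNReal.toReal_mono ENNReal.one_ne_top prob_le_one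
  have hdiv_a : t/(2*a) ≤ t/a :=
    div_le_div_of_nonneg_left htpos.le ha (by linarith)
  have hGa2a : 1 - F (t/a) ≤ 1 - F (t/(2*a)) := hGanti hdiv_a
  have ht₀a : t₀ ≤ t/a := le_trans h2a_t₀ hdiv_a
  -- region A
  have hA : ‖∫ x in Iic (-s2), g x ∂μK‖
      ≤ (1 - F (t/(2*a))) * (M * (1 - F s2)) := by
    have hb1 : ‖∫ x in Iic (-s2), g x ∂μK‖
        ≤ (1 - F (t/a)) * (μK (Iic (-s2))).toReal := by
      apply norm_setIntegral_le_of_norm_le_const (measure_lt_top _ _)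
      intro x hx
      have hxle : x ≤ 0 := le_trans hx (by linarith)
      have harg : t/a ≤ (t - x)/a := (div_le_div_iff_of_pos_right ha).mpr (by linarith)
      have hf1 : 1 - F ((t - x)/a) ≤ 1 - F (t/a) := hGanti harg
      have hf0 := hGnn ((t - x)/a)
      have hc0 := hGnn (t/a)
      show ‖(1 - F ((t - x)/a)) - (1 - F (t/a))‖ ≤ 1 - F (t/a)
      rw [Real.norm_eq_abs, abs_le]
      constructor <;> linarith
    calc ‖∫ x in Iic (-s2), g x ∂μK‖ ≤ (1 - F (t/a)) * (μK (Iic (-s2))).toReal := hb1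
      _ ≤ (1 - F (t/a)) * (M * (1 - F s2)) :=
          mul_le_mul_of_nonneg_left ((hK s2 hs2nn).2) (hGnn _)
      _ ≤ (1 - F (t/(2*a))) * (M * (1 - F s2)) :=
          mul_le_mul_of_nonneg_right hGa2a (mul_nonneg hM.le (hGnn _))
  -- the integral-to-2L/s2 computation
  have hprod : s2/a * (L*(2*a)/t) = 2*L/s2 := by
    rw [← hts2]; field_simp
  -- region B
  have hB : ‖∫ x in Ioc (-s2) 0, g x ∂μK‖
      ≤ (1 - F (t/(2*a))) * (2*L/s2) := by
    have hb1 : ‖∫ x in Ioc (-s2) 0, g x ∂μK‖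
        ≤ ((1 - F (t/a)) * (2*L/s2)) * (μK (Ioc (-s2) 0)).toReal := by
      apply norm_setIntegral_le_of_norm_le_const (measure_lt_top _ _)
      intro x hx
      have harg : t/a ≤ (t - x)/a := (div_le_div_iff_of_pos_right ha).mpr (by linarith [hx.2])
      have harg2 : (t - x)/a ≤ 2*t/a := (div_le_div_iff_of_pos_right ha).mpr (by linarith [hx.1])
      have hJx : (∫ u in (t/a)..((t - x)/a), h u) ≤ 2*L/s2 := by
        refine le_trans (hJ (t/a) ((t - x)/a) hdiv_a harg harg2) ?_
        have hfac : (t - x)/a - t/a ≤ s2/a :=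
          by rw [div_sub_div_same]; exact (div_le_div_iff_of_pos_right ha).mpr (by linarith [hx.1])
        calc ((t - x)/a - t/a) * (L*(2*a)/t) ≤ s2/a * (L*(2*a)/t) :=
              mul_le_mul_of_nonneg_right hfac (by positivity)
          _ = 2*L/s2 := hprod
      have hdiff := hGdiff (t/a) ((t - x)/a) ht₀a harg
      have hf1 : 1 - F ((t - x)/a) ≤ 1 - F (t/a) := hGanti harg
      have hle2 : (1 - F (t/a)) * (∫ u in (t/a)..((t - x)/a), h u)
          ≤ (1 - F (t/a)) * (2*L/s2) := mul_le_mul_of_nonneg_left hJx (hGnn _)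
      show ‖(1 - F ((t - x)/a)) - (1 - F (t/a))‖ ≤ (1 - F (t/a)) * (2*L/s2)
      rw [Real.norm_eq_abs, abs_of_nonpos (by linarith)]
      linarith
    calc ‖∫ x in Ioc (-s2) 0, g x ∂μK‖
        ≤ ((1 - F (t/a)) * (2*L/s2)) * (μK (Ioc (-s2) 0)).toReal := hb1
      _ ≤ ((1 - F (t/a)) * (2*L/s2)) * 1 := by
          apply mul_le_mul_of_nonneg_left (hmass_le_one _)
          exact mul_nonneg (hGnn _) (by positivity)
      _ = (1 - F (t/a)) * (2*L/s2) := mul_one _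
      _ ≤ (1 - F (t/(2*a))) * (2*L/s2) :=
          mul_le_mul_of_nonneg_right hGa2a (by positivity)
  -- region C
  have hC : ‖∫ x in Ioc 0 s2, g x ∂μK‖
      ≤ (1 - F (t/(2*a))) * (2*L/s2) := by
    have hb1 : ‖∫ x in Ioc 0 s2, g x ∂μK‖
        ≤ ((1 - F (t/(2*a))) * (2*L/s2)) * (μK (Ioc 0 s2)).toReal := by
      apply norm_setIntegral_le_of_norm_le_const (measure_lt_top _ _)
      intro x hx
      have harg : (t - x)/a ≤ t/a := (div_le_div_iff_of_pos_right ha).mpr (by linarith [hx.1])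
      have hlow : t/(2*a) ≤ (t - x)/a := by
        rw [show t/(2*a) = (t/2)/a by ring]
        exact (div_le_div_iff_of_pos_right ha).mpr (by linarith [hx.2, hs2let2])
      have hup : t/a ≤ 2*t/a := (div_le_div_iff_of_pos_right ha).mpr (by linarith)
      have ht₀x : t₀ ≤ (t - x)/a := le_trans h2a_t₀ hlow
      have hJx : (∫ u in ((t - x)/a)..(t/a), h u) ≤ 2*L/s2 := by
        refine le_trans (hJ ((t - x)/a) (t/a) hlow harg hup) ?_
        have hfac : t/a - (t - x)/a ≤ s2/a := by
          rw [div_sub_div_same]; exact (div_le_div_iff_of_pos_right ha).mpr (by linarith [hx.2])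
        calc (t/a - (t - x)/a) * (L*(2*a)/t) ≤ s2/a * (L*(2*a)/t) :=
              mul_le_mul_of_nonneg_right hfac (by positivity)
          _ = 2*L/s2 := hprod
      have hJnn : 0 ≤ ∫ u in ((t - x)/a)..(t/a), h u := aux_int_nonneg hh ht₀x harg
      have hdiff := hGdiff ((t - x)/a) (t/a) ht₀x harg
      have hf1 : 1 - F ((t - x)/a) ≤ 1 - F (t/(2*a)) := hGanti hlow
      have hf2 : 1 - F (t/a) ≤ 1 - F ((t - x)/a) := hGanti harg
      have hle2 : (1 - F ((t - x)/a)) * (∫ u in ((t - x)/a)..(t/a), h u)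
          ≤ (1 - F (t/(2*a))) * (2*L/s2) :=
        mul_le_mul hf1 hJx hJnn (hGnn _)
      show ‖(1 - F ((t - x)/a)) - (1 - F (t/a))‖ ≤ (1 - F (t/(2*a))) * (2*L/s2)
      rw [Real.norm_eq_abs, abs_of_nonneg (by linarith)]
      linarith
    calc ‖∫ x in Ioc 0 s2, g x ∂μK‖
        ≤ ((1 - F (t/(2*a))) * (2*L/s2)) * (μK (Ioc 0 s2)).toReal := hb1
      _ ≤ ((1 - F (t/(2*a))) * (2*L/s2)) * 1 := by
          apply mul_le_mul_of_nonneg_left (hmass_le_one _)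
          exact mul_nonneg (hGnn _) (by positivity)
      _ = (1 - F (t/(2*a))) * (2*L/s2) := mul_one _
  -- region D
  have hD : ‖∫ x in Ioc s2 (t/2), g x ∂μK‖
      ≤ (1 - F (t/(2*a))) * (M * (1 - F s2)) := by
    have hb1 : ‖∫ x in Ioc s2 (t/2), g x ∂μK‖
        ≤ (1 - F (t/(2*a))) * (μK (Ioc s2 (t/2))).toReal := by
      apply norm_setIntegral_le_of_norm_le_const (measure_lt_top _ _)
      intro x hx
      have hlow : t/(2*a) ≤ (t - x)/a := by
        rw [show t/(2*a) = (t/2)/a by ring]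
        exact (div_le_div_iff_of_pos_right ha).mpr (by linarith [hx.2])
      have hf1 : 1 - F ((t - x)/a) ≤ 1 - F (t/(2*a)) := hGanti hlow
      have hf0 := hGnn ((t - x)/a)
      have hc1 : 1 - F (t/a) ≤ 1 - F (t/(2*a)) := hGa2a
      have hc0 := hGnn (t/a)
      show ‖(1 - F ((t - x)/a)) - (1 - F (t/a))‖ ≤ 1 - F (t/(2*a))
      rw [Real.norm_eq_abs, abs_le]
      constructor <;> linarith
    calc ‖∫ x in Ioc s2 (t/2), g x ∂μK‖
        ≤ (1 - F (t/(2*a))) * (μK (Ioc s2 (t/2))).toReal := hb1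
      _ ≤ (1 - F (t/(2*a))) * (M * (1 - F s2)) := by
          apply mul_le_mul_of_nonneg_left _ (hGnn _)
          exact le_trans (ENNReal.toReal_mono (measure_ne_top _ _)
            (measure_mono Set.Ioc_subset_Ioi_self)) ((hK s2 hs2nn).1)
  -- tail term
  have htail : (1 - F (t/a)) * (μK (Ioi (t/2))).toReal
      ≤ (1 - F (t/(2*a))) * (M * (1 - F (t/2))) :=
    mul_le_mul hGa2a ((hK (t/2) (by linarith)).1) ENNReal.toReal_nonneg (hGnn _)
  have htailnn : 0 ≤ (1 - F (t/a)) * (μK (Ioi (t/2))).toReal :=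
    mul_nonneg (hGnn _) ENNReal.toReal_nonneg
  -- assemble
  have hNbound : ‖Tops μK (fun s => 1 - F (s/a)) t - (1 - F (t/a))‖
      ≤ (1 - F (t/(2*a))) * (2*M*(1 - F s2) + 4*L/s2 + M*(1 - F (t/2))) := by
    rw [hdecomp]
    have h1 : ‖(∫ x in Iic (t/2), g x ∂μK) - (1 - F (t/a)) * (μK (Ioi (t/2))).toReal‖
        ≤ ‖∫ x in Iic (t/2), g x ∂μK‖ + (1 - F (t/a)) * (μK (Ioi (t/2))).toReal := by
      rw [Real.norm_eq_abs]
      calc |(∫ x in Iic (t/2), g x ∂μK) - (1 - F (t/a)) * (μK (Ioi (t/2))).toReal|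
          ≤ |∫ x in Iic (t/2), g x ∂μK| + |(1 - F (t/a)) * (μK (Ioi (t/2))).toReal| :=
            abs_sub _ _
        _ = ‖∫ x in Iic (t/2), g x ∂μK‖ + (1 - F (t/a)) * (μK (Ioi (t/2))).toReal := by
            rw [abs_of_nonneg htailnn, Real.norm_eq_abs]
    have h2 : ‖∫ x in Iic (t/2), g x ∂μK‖
        ≤ ‖∫ x in Iic (-s2), g x ∂μK‖ + ‖∫ x in Ioc (-s2) 0, g x ∂μK‖
          + ‖∫ x in Ioc 0 s2, g x ∂μK‖ + ‖∫ x in Ioc s2 (t/2), g x ∂μK‖ := by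
      have n3 := norm_add_le (∫ x in Ioc 0 s2, g x ∂μK) (∫ x in Ioc s2 (t/2), g x ∂μK)
      have n2 := norm_add_le (∫ x in Ioc (-s2) 0, g x ∂μK)
        ((∫ x in Ioc 0 s2, g x ∂μK) + (∫ x in Ioc s2 (t/2), g x ∂μK))
      have n1 := norm_add_le (∫ x in Iic (-s2), g x ∂μK)
        ((∫ x in Ioc (-s2) 0, g x ∂μK)
          + ((∫ x in Ioc 0 s2, g x ∂μK) + (∫ x in Ioc s2 (t/2), g x ∂μK)))
      rw [hsplit1, hsplit2, hsplit3]
      linarith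
    have := le_trans h1 (by linarith [hA, hB, hC, hD, htail, h2] :
      ‖∫ x in Iic (t/2), g x ∂μK‖ + (1 - F (t/a)) * (μK (Ioi (t/2))).toReal
        ≤ (1 - F (t/(2*a))) * (M * (1 - F s2)) + (1 - F (t/(2*a))) * (2*L/s2)
          + (1 - F (t/(2*a))) * (2*L/s2) + (1 - F (t/(2*a))) * (M * (1 - F s2))
          + (1 - F (t/(2*a))) * (M * (1 - F (t/2))))
    calc ‖(∫ x in Iic (t/2), g x ∂μK) - (1 - F (t/a)) * (μK (Ioi (t/2))).toReal‖
        ≤ _ := this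
      _ = (1 - F (t/(2*a))) * (2*M*(1 - F s2) + 4*L/s2 + M*(1 - F (t/2))) := by ring
  -- final comparison with the denominator
  have hRnn : 0 ≤ 2*M*(1 - F s2) + 4*L/s2 + M*(1 - F (t/2)) := by
    have h1 := hGnn s2; have h2 := hGnn (t/2)
    have h3 : 0 ≤ 4*L/s2 := by positivity
    nlinarith [hM.le]
  have hratio2 : 1 - F (t/(2*a)) ≤ (1 - F (t/b)) * t ^ (1/4:ℝ) := by
    have hc1le : c1 * t ≤ t/(2*a) := by
      calc c1 * t ≤ (1/(2*a)) * t :=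
            mul_le_mul_of_nonneg_right (min_le_left _ _) htpos.le
        _ = t/(2*a) := by ring
    have h1 : 1 - F (t/(2*a)) ≤ 1 - F (c1 * t) := hGanti hc1le
    have h2 := hL3t
    rw [show (1/b) * t = t/b by ring] at h2
    exact le_trans h1 h2
  have hDpos : 0 < 1 - F (t/b) := hGpos (t/b)
  rw [norm_div, Real.norm_eq_abs (1 - F (t/b)), abs_of_pos hDpos,
    div_le_iff₀ hDpos]
  calc ‖Tops μK (fun s => 1 - F (s/a)) t - (1 - F (t/a))‖
      ≤ (1 - F (t/(2*a))) * (2*M*(1 - F s2) + 4*L/s2 + M*(1 - F (t/2))) := hNbound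
    _ ≤ ((1 - F (t/b)) * t ^ (1/4:ℝ))
          * (2*M*(1 - F s2) + 4*L/s2 + M*(1 - F (t/2))) :=
        mul_le_mul_of_nonneg_right hratio2 hRnn
    _ = E t * (1 - F (t/b)) := by
        simp only [hEdef, ← hs2def, ← hLdef]
        ring

end Aux

/-- under (BasicH), `t·h(t)/log t → 0` and
`limsup t·h(t)²/h(1/h(t)) < ∞`, for `K ∈ B(F,M)` and positive `a`, `b`,
`(T_K F̄(·/a))(t) − F̄(t/a) = o(F̄(t/b))`. -/
theorem stmt_17 (F h : ℝ → ℝ) (t₀ : ℝ) (hF : IsCDF F)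
    (hh : HasHazardRate F h t₀) (hb : BasicH h)
    (hi : Filter.Tendsto (fun t => t * h t / Real.log t) Filter.atTop (nhds 0))
    (hii : ∃ C : ℝ, ∀ᶠ t in Filter.atTop, t * h t ^ 2 / h (1 / h t) ≤ C)
    (M : ℝ) (hM : 0 < M) (μK : Measure ℝ) [IsProbabilityMeasure μK]
    (hK : MemB F M μK) :
    ∀ a b : ℝ, 0 < a → 0 < b →
      Filter.Tendsto
        (fun t => (Tops μK (fun s => 1 - F (s / a)) t - (1 - F (t / a))) / (1 - F (t / b)))
        Filter.atTop (nhds 0) :=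
  stmt_17' F h t₀ hF hh hb.2.1 hi M hM μK hK
end
end
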